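/- For real A, δ, x with A > 0, δ > 0, x > 1, one has ∫_0^1 e^{-Aδ(1+x)t} dt > ∫_0^1 e^{-Aδ(1+(x-1)t)} dt. -/

import Mathlib

open Real intervalIntegral

lemma sinh_le_mul_cosh {s : ℝ} (hs : 0 ≤ s) : Real.sinh s ≤ s * Real.cosh s := by
  have h : MonotoneOn (fun t => t * Real.cosh t - Real.sinh t) (Set.Ici 0) := by
    refine monotoneOn_of_deriv_nonneg (convex_Ici 0)
      ((continuous_id.mul Real.continuous_cosh).sub Real.continuous_sinh).continuousOn
      (fun t _ => ((differentiableAt_fun_id.mul Real.differentiable_cosh.differentiableAt).sub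
        Real.differentiable_sinh.differentiableAt).differentiableWithinAt) ?_
    intro t ht
    rw [interior_Ici, Set.mem_Ioi] at ht
    have : deriv (fun t => t * Real.cosh t - Real.sinh t) t = t * Real.sinh t := by
      rw [deriv_fun_sub, deriv_fun_mul, Real.deriv_cosh, Real.deriv_sinh, deriv_id'']
      · ring
      · exact differentiableAt_fun_id
      · exact Real.differentiable_cosh.differentiableAt
      · exact differentiableAt_fun_id.mul Real.differentiable_cosh.differentiableAt
      · exact Real.differentiable_sinh.differentiableAt
    rw [this]
    exact mul_nonneg ht.le (Real.sinh_nonneg_iff.2 ht.le)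
  have := h (Set.self_mem_Ici) hs hs
  simpa using this

lemma int_exp_neg (k : ℝ) (hk : k ≠ 0) :
    ∫ t in (0:ℝ)..1, Real.exp (-(k * t)) = (1 - Real.exp (-k)) / k := by
  have h : ∀ t ∈ Set.uIcc (0:ℝ) 1, HasDerivAt (fun u => -Real.exp (-(k * u)) / k)
      (Real.exp (-(k * t))) t := by
    intro t _
    have h1 : HasDerivAt (fun u : ℝ => -(k * u)) (-k) t := by
      simpa using ((hasDerivAt_id t).const_mul k).fun_neg
    have h2 := (Real.hasDerivAt_exp (-(k * t))).comp t h1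
    have h3 := (h2.neg).div_const k
    convert h3 using 1
    · rfl
    · rfl
    · rfl
    · field_simp
  rw [intervalIntegral.integral_eq_sub_of_hasDerivAt h
    ((Real.continuous_exp.comp (continuous_const.mul continuous_id).neg).intervalIntegrable 0 1)]
  simp only [mul_one, mul_zero, neg_zero, Real.exp_zero]
  ring

lemma key_ineq (b c : ℝ) (hb : 0 < b) (hc : 0 < c) :
    Real.exp (-c) * (1 - Real.exp (-b)) * (b + 2 * c) < (1 - Real.exp (-(b + 2 * c))) * b := by
  set p := Real.exp (-(c / 2)) with hp
  set q := Real.exp (-(b / 2)) with hq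
  have hp0 : 0 < p := Real.exp_pos _
  have hq0 : 0 < q := Real.exp_pos _
  have hp1 : p < 1 := Real.exp_lt_one_iff.2 (by linarith)
  have hq1 : q < 1 := Real.exp_lt_one_iff.2 (by linarith)
  have hec : Real.exp (-c) = p ^ 2 := by
    rw [hp, ← Real.exp_nat_mul]; congr 1; ring
  have heb : Real.exp (-b) = q ^ 2 := by
    rw [hq, ← Real.exp_nat_mul]; congr 1; ring
  have hea : Real.exp (-(b + 2 * c)) = p ^ 4 * q ^ 2 := by
    rw [hp, hq, ← Real.exp_nat_mul, ← Real.exp_nat_mul, ← Real.exp_add]; congr 1; ring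
  -- sinh strict: c * p < 1 - p ^ 2
  have hsinh : c * p < 1 - p ^ 2 := by
    have h1 : c / 2 < Real.sinh (c / 2) := Real.self_lt_sinh_iff.2 (by linarith)
    rw [Real.sinh_eq] at h1
    have hpe : Real.exp (c / 2) = 1 / p := by
      rw [hp, eq_div_iff (Real.exp_pos _).ne', ← Real.exp_add]; simp
    rw [hpe, ← hp] at h1
    have := mul_lt_mul_of_pos_right h1 hp0
    calc c * p = (c / 2) * p * 2 := by ring
      _ < (1 / p - p) / 2 * p * 2 := by nlinarith
      _ = 1 - p ^ 2 := by field_simp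
  -- b lemma: 2 * (1 - q ^ 2) ≤ b * (1 + q ^ 2)
  have hbl : 2 * (1 - q ^ 2) ≤ b * (1 + q ^ 2) := by
    have h1 : Real.sinh (b / 2) ≤ (b / 2) * Real.cosh (b / 2) := sinh_le_mul_cosh (by linarith)
    rw [Real.sinh_eq, Real.cosh_eq] at h1
    have hqe : Real.exp (b / 2) = 1 / q := by
      rw [hq, eq_div_iff (Real.exp_pos _).ne', ← Real.exp_add]; simp
    rw [hqe, ← hq] at h1
    have h2 := mul_le_mul_of_nonneg_right h1 hq0.le
    have hqne : q ≠ 0 := hq0.ne'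
    calc 2 * (1 - q ^ 2) = ((1 / q - q) / 2) * q * 4 := by field_simp; ring
      _ ≤ (b / 2 * ((1 / q + q) / 2)) * q * 4 := by nlinarith
      _ = b * (1 + q ^ 2) := by field_simp; ring
  rw [hec, heb, hea]
  have hq2 : q ^ 2 < 1 := by nlinarith
  have hpq2 : p * q ^ 2 ≤ 1 := by nlinarith
  have hpos : (0:ℝ) < 2 * p * (1 - q ^ 2) := by nlinarith [hp0, hq2]
  have key2 : 2 * p * (1 - q ^ 2) ≤ b * (1 + p ^ 2 * q ^ 2) := by
    nlinarith [mul_le_mul_of_nonneg_left hbl hp0.le,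
      mul_nonneg hb.le (mul_nonneg (sub_nonneg.2 hp1.le) (sub_nonneg.2 hpq2))]
  have t1 : c * p * (2 * p * (1 - q ^ 2)) < (1 - p ^ 2) * (2 * p * (1 - q ^ 2)) :=
    mul_lt_mul_of_pos_right hsinh hpos
  have t2 : (1 - p ^ 2) * (2 * p * (1 - q ^ 2)) ≤ (1 - p ^ 2) * (b * (1 + p ^ 2 * q ^ 2)) :=
    mul_le_mul_of_nonneg_left key2 (by nlinarith)
  nlinarith [t1, t2]

/-- For `A > 0`, `δ > 0`, `x > 1`:
`∫_0^1 e^{-Aδ(1+x)t} dt > ∫_0^1 e^{-Aδ(1+(x-1)t)} dt`. -/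
theorem integral_exp_layer_ineq (A δ x : ℝ) (hA : 0 < A) (hδ : 0 < δ) (hx : 1 < x) :
    (∫ t in (0:ℝ)..1, Real.exp (-(A * δ * (1 + (x - 1) * t))))
      < ∫ t in (0:ℝ)..1, Real.exp (-(A * δ * (1 + x) * t)) := by
  have hc : 0 < A * δ := mul_pos hA hδ
  have hb : 0 < A * δ * (x - 1) := mul_pos hc (by linarith)
  have ha : 0 < A * δ * (1 + x) := mul_pos hc (by linarith)
  set c := A * δ
  set b := A * δ * (x - 1) with hbd
  have hlhs : (∫ t in (0:ℝ)..1, Real.exp (-(A * δ * (1 + (x - 1) * t))))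
      = Real.exp (-c) * ((1 - Real.exp (-b)) / b) := by
    have : ∀ t : ℝ, -(A * δ * (1 + (x - 1) * t)) = -c + -(b * t) := by
      intro t; rw [hbd]; ring
    simp_rw [this, Real.exp_add, intervalIntegral.integral_const_mul,
      int_exp_neg b hb.ne']
  have hrhs : (∫ t in (0:ℝ)..1, Real.exp (-(A * δ * (1 + x) * t)))
      = (1 - Real.exp (-(A * δ * (1 + x)))) / (A * δ * (1 + x)) :=
    int_exp_neg _ ha.ne'
  rw [hlhs, hrhs]
  have habc : A * δ * (1 + x) = b + 2 * c := by rw [hbd]; ring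
  rw [habc, mul_div_assoc']
  rw [div_lt_div_iff₀ hb (by linarith)]
  have := key_ineq b c hb hc
  nlinarith [this]
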